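/- Let Λ ⊂ ℝ^k be a lattice with norm-minimal fundamental domain (Voronoi cell) F = {x ∈ ℝ^k : ∀ λ ∈ Λ\{0}, ‖x‖₂ < ‖x − λ‖₂}, and let λ* be a shortest nonzero vector of the dual lattice Λ^∨ = {λ' : ∀ λ ∈ Λ, ⟨λ',λ⟩ ∈ ℤ}. Then ‖λ*‖₂ · diam(F) ≥ 1. -/

import Mathlib

open Metric

section aux

variable {k : ℕ}

local notation "E" => EuclideanSpace ℝ (Fin k)

lemma voronoi_strict_iff (x l : E) :
    ‖x‖ < ‖x - l‖ ↔ 2 * (inner ℝ x l : ℝ) < ‖l‖ ^ 2 := by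
  have h := norm_sub_sq_real x l
  have h0 : 0 ≤ ‖x‖ := norm_nonneg x
  have h1 : 0 ≤ ‖x - l‖ := norm_nonneg (x - l)
  constructor
  · intro hlt
    nlinarith
  · intro hlt
    nlinarith

lemma voronoi_weak_iff (x l : E) :
    ‖x‖ ≤ ‖x - l‖ ↔ 2 * (inner ℝ x l : ℝ) ≤ ‖l‖ ^ 2 := by
  have h := norm_sub_sq_real x l
  have h0 : 0 ≤ ‖x‖ := norm_nonneg x
  have h1 : 0 ≤ ‖x - l‖ := norm_nonneg (x - l)
  constructor
  · intro hle
    nlinarith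
  · intro hle
    nlinarith

end aux

set_option maxHeartbeats 1000000 in
/-- for a full-rank lattice `Λ ⊂ ℝ^k` with Voronoi cell `F` and shortest
nonzero dual vector `λ*`, one has `‖λ*‖ · diam(F) ≥ 1`. -/
theorem dual_shortest_vector_mul_diam_ge_one {k : ℕ} (hk : 0 < k)
    (Λ : Submodule ℤ (EuclideanSpace ℝ (Fin k)))
    (hdisc : DiscreteTopology Λ)
    (hspan : Submodule.span ℝ (Λ : Set (EuclideanSpace ℝ (Fin k))) = ⊤)
    (lstar : EuclideanSpace ℝ (Fin k))
    (hdualmem : ∀ l ∈ Λ, ∃ m : ℤ, (inner ℝ lstar l : ℝ) = (m : ℝ))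
    (hne : lstar ≠ 0)
    (hmin : ∀ v : EuclideanSpace ℝ (Fin k), v ≠ 0 →
      (∀ l ∈ Λ, ∃ m : ℤ, (inner ℝ v l : ℝ) = (m : ℝ)) → ‖lstar‖ ≤ ‖v‖) :
    1 ≤ ‖lstar‖ *
      Metric.diam {x : EuclideanSpace ℝ (Fin k) |
        ∀ l ∈ Λ, l ≠ 0 → ‖x‖ < ‖x - l‖} := by
  classical
  set F : Set (EuclideanSpace ℝ (Fin k)) :=
    {x | ∀ l ∈ Λ, l ≠ 0 → ‖x‖ < ‖x - l‖} with hF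
  set C : Set (EuclideanSpace ℝ (Fin k)) :=
    {x | ∀ l ∈ Λ, ‖x‖ ≤ ‖x - l‖} with hC
  -- F ⊆ C
  have hFC : F ⊆ C := by
    intro x hx l hl
    by_cases h0 : l = 0
    · simp [h0]
    · exact le_of_lt (hx l hl h0)
  -- C ⊆ closure F
  have hCclF : C ⊆ closure F := by
    intro y hy
    have hseq : Filter.Tendsto (fun n : ℕ => (1 - (1 : ℝ) / (n + 1)) • y)
        Filter.atTop (nhds y) := by
      have h1 : Filter.Tendsto (fun n : ℕ => (1 - (1 : ℝ) / (n + 1)))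
          Filter.atTop (nhds 1) := by
        have := tendsto_one_div_add_atTop_nhds_zero_nat (𝕜 := ℝ)
        have h := Filter.Tendsto.const_sub (1 : ℝ) this
        simpa using h
      have := h1.smul_const y
      simpa using this
    refine mem_closure_of_tendsto hseq (Filter.Eventually.of_forall fun n => ?_)
    intro l hl hl0
    rw [voronoi_strict_iff]
    have hyl : 2 * (inner ℝ y l : ℝ) ≤ ‖l‖ ^ 2 := (voronoi_weak_iff y l).1 (hy l hl)
    have hlpos : (0 : ℝ) < ‖l‖ ^ 2 := pow_pos (norm_pos_iff.mpr hl0) 2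
    have hn1 : (0 : ℝ) < (n : ℝ) + 1 := by positivity
    set t : ℝ := 1 - (1 : ℝ) / (n + 1) with ht
    have hdle : (1 : ℝ) / ((n : ℝ) + 1) ≤ 1 := by
      rw [div_le_one hn1]
      linarith [Nat.cast_nonneg (α := ℝ) n]
    have hdpos : (0 : ℝ) < 1 / ((n : ℝ) + 1) := by positivity
    have ht0 : 0 ≤ t := by rw [ht]; linarith
    have ht1 : t < 1 := by rw [ht]; linarith
    have hsm : (inner ℝ (t • y) l : ℝ) = t * (inner ℝ y l : ℝ) := real_inner_smul_left y l t
    rw [hsm]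
    rcases le_or_gt (inner ℝ y l : ℝ) 0 with h | h
    · nlinarith
    · nlinarith
  -- lattice structure : boundedness of C
  haveI : IsZLattice ℝ Λ := ⟨hspan⟩
  haveI : Module.Finite ℤ Λ := ZLattice.module_finite ℝ Λ
  haveI : Module.Free ℤ Λ := ZLattice.module_free ℝ Λ
  set b := Module.Free.chooseBasis ℤ Λ with hb
  set bR := Module.Basis.ofZLatticeBasis ℝ Λ b with hbR
  have hspanbR : Submodule.span ℤ (Set.range bR) = Λ := b.ofZLatticeBasis_span ℝ
  set R : ℝ := ∑ i, ‖bR i‖ with hR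
  have hRnn : 0 ≤ R := Finset.sum_nonneg fun i _ => norm_nonneg _
  -- every point has a lattice point within distance R
  have hcover : ∀ x : EuclideanSpace ℝ (Fin k), ∃ l ∈ Λ, ‖x - l‖ ≤ R := by
    intro x
    refine ⟨(ZSpan.floor bR x : EuclideanSpace ℝ (Fin k)), ?_, ?_⟩
    · exact (SetLike.ext_iff.mp hspanbR _).mp (ZSpan.floor bR x).2
    · have : x - (ZSpan.floor bR x : EuclideanSpace ℝ (Fin k)) = ZSpan.fract bR x :=
        (ZSpan.fract_apply bR x).symm
      rw [this]
      exact ZSpan.norm_fract_le bR x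
  have hCbdd : C ⊆ Metric.closedBall 0 R := by
    intro x hx
    obtain ⟨l, hl, hlR⟩ := hcover x
    have := hx l hl
    simpa [mem_closedBall, dist_zero_right] using this.trans hlR
  have hFbdd : Bornology.IsBounded F :=
    (Metric.isBounded_closedBall (x := (0 : EuclideanSpace ℝ (Fin k))) (r := R)).subset
      (hFC.trans hCbdd)
  -- the special point
  have hnlpos : (0 : ℝ) < ‖lstar‖ := norm_pos_iff.mpr hne
  set x₀ : EuclideanSpace ℝ (Fin k) := ((2 * ‖lstar‖ ^ 2)⁻¹) • lstar with hx₀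
  have hinnx₀ : (inner ℝ lstar x₀ : ℝ) = 1 / 2 := by
    rw [hx₀, real_inner_smul_right, real_inner_self_eq_norm_sq]
    field_simp
  -- closedness of Λ
  have hclosed : IsClosed (Λ : Set (EuclideanSpace ℝ (Fin k))) := by
    haveI : DiscreteTopology Λ.toAddSubgroup := hdisc
    exact AddSubgroup.isClosed_of_discrete (H := Λ.toAddSubgroup)
  -- nearest lattice point to x₀
  have hnearest : ∃ l₀ ∈ Λ, ∀ l ∈ Λ, ‖x₀ - l₀‖ ≤ ‖x₀ - l‖ := by
    set S : Set (EuclideanSpace ℝ (Fin k)) :=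
      (Λ : Set (EuclideanSpace ℝ (Fin k))) ∩ Metric.closedBall x₀ ‖x₀‖ with hS
    have hScpt : IsCompact S :=
      (isCompact_closedBall x₀ ‖x₀‖).inter_left hclosed
    have hSne : S.Nonempty := by
      refine ⟨0, Λ.zero_mem, ?_⟩
      simp [mem_closedBall, dist_comm, dist_zero_right]
    obtain ⟨l₀, hl₀S, hl₀min⟩ := hScpt.exists_isMinOn hSne
      (Continuous.continuousOn ((continuous_const.sub continuous_id).norm))
    refine ⟨l₀, hl₀S.1, fun l hl => ?_⟩
    by_cases hmem : l ∈ Metric.closedBall x₀ ‖x₀‖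
    · exact hl₀min ⟨hl, hmem⟩
    · have h1 : ‖x₀ - l₀‖ ≤ ‖x₀ - 0‖ := hl₀min ⟨Λ.zero_mem, by
        simp [mem_closedBall, dist_comm, dist_zero_right]⟩
      have h2 : ‖x₀‖ < ‖x₀ - l‖ := by
        have := hmem
        rw [mem_closedBall, not_le, dist_comm, dist_eq_norm] at this
        exact this
      simp only [sub_zero] at h1
      linarith
  obtain ⟨l₀, hl₀, hl₀min⟩ := hnearest
  set y : EuclideanSpace ℝ (Fin k) := x₀ - l₀ with hy
  have hyC : y ∈ C := by
    intro l hl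
    have : ‖x₀ - l₀‖ ≤ ‖x₀ - (l₀ + l)‖ := hl₀min (l₀ + l) (Λ.add_mem hl₀ hl)
    have heq : x₀ - (l₀ + l) = y - l := by rw [hy]; abel
    rwa [heq] at this
  have hnyC : -y ∈ C := by
    intro l hl
    have := hyC (-l) (Λ.neg_mem hl)
    have heq : ‖y - -l‖ = ‖-y - l‖ := by
      rw [← norm_neg (y - -l)]; congr 1; abel
    rw [heq] at this
    simpa using this
  -- lower bound on ‖y‖
  obtain ⟨m, hm⟩ := hdualmem l₀ hl₀
  have hinny : (inner ℝ lstar y : ℝ) = 1 / 2 - m := by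
    rw [hy, inner_sub_right, hinnx₀, hm]
  have habs : (1 : ℝ) / 2 ≤ |(inner ℝ lstar y : ℝ)| := by
    rw [hinny]
    rcases le_or_gt (m : ℝ) 0 with h | h
    · rw [abs_of_nonneg (by linarith)]; linarith
    · have : (1 : ℝ) ≤ m := by exact_mod_cast h
      rw [abs_of_nonpos (by linarith)]; linarith
  have hyb : 1 / (2 * ‖lstar‖) ≤ ‖y‖ := by
    have h1 : |(inner ℝ lstar y : ℝ)| ≤ ‖lstar‖ * ‖y‖ := abs_real_inner_le_norm lstar y
    have hpos : (0 : ℝ) < 2 * ‖lstar‖ := by linarith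
    rw [div_le_iff₀ hpos]
    have h2 : (1 : ℝ) / 2 ≤ ‖lstar‖ * ‖y‖ := le_trans habs h1
    nlinarith
  -- conclude via diameter
  have hyF : y ∈ closure F := hCclF hyC
  have hnyF : -y ∈ closure F := hCclF hnyC
  have hdistle : dist y (-y) ≤ Metric.diam F := by
    rw [← Metric.diam_closure]
    exact Metric.dist_le_diam_of_mem (hFbdd.closure) hyF hnyF
  have hdist : dist y (-y) = 2 * ‖y‖ := by
    rw [dist_eq_norm, sub_neg_eq_add, ← two_smul ℝ y, norm_smul]
    simp
  have hdiam : 1 / ‖lstar‖ ≤ Metric.diam F := by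
    rw [hdist] at hdistle
    have : 1 / ‖lstar‖ = 2 * (1 / (2 * ‖lstar‖)) := by field_simp
    rw [this]
    linarith
  calc (1 : ℝ) = ‖lstar‖ * (1 / ‖lstar‖) := by field_simp
    _ ≤ ‖lstar‖ * Metric.diam F := by
        exact mul_le_mul_of_nonneg_left hdiam (le_of_lt hnlpos)
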